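/- For every t ∈ (0, T), the second derivative of the transmission-energy function t ↦ (t/(η·h²))·N₀·(2^{(T−t)/(B·R·β·t)} − 1) equals N₀·(T·ln 2)²/(η·(h·B·R·β)²·t³) · 2^{(T−t)/(B·R·β·t)}; in particular it is strictly positive on (0, T). -/

import Mathlib

open Real Set

/-- The second derivative of the transmission-energy function
`t ↦ (t/(η h²)) N₀ (2^{(T−t)/(B R β t)} − 1)` equals
`N₀ (T ln 2)²/(η (h B R β)² t³) · 2^{(T−t)/(B R β t)}` on `(0, T)`;
in particular it is strictly positive there. -/
theorem transmission_energy_second_derivative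
    (N0 B R β h η T : ℝ)
    (hN0 : 0 < N0) (hB : 0 < B) (hR : 0 < R) (hβ : 0 < β)
    (hh : 0 < h) (hη : 0 < η) (hT : 0 < T) :
    ∀ t ∈ Ioo 0 T,
      deriv (deriv (fun s : ℝ =>
          (s / (η * h ^ 2)) * (N0 * ((2 : ℝ) ^ ((T - s) / (B * R * β * s)) - 1)))) t
        = N0 * (T * Real.log 2) ^ 2 / (η * (h * B * R * β) ^ 2 * t ^ 3) *
            (2 : ℝ) ^ ((T - t) / (B * R * β * t)) ∧
      0 < deriv (deriv (fun s : ℝ =>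
          (s / (η * h ^ 2)) * (N0 * ((2 : ℝ) ^ ((T - s) / (B * R * β * s)) - 1)))) t := by
  intro t ht
  obtain ⟨ht0, htT⟩ := ht
  set c := B * R * β with hc
  have hc0 : 0 < c := by positivity
  set A := η * h ^ 2 with hA
  have hA0 : 0 < A := by positivity
  set L := Real.log 2 with hL
  have hL0 : 0 < L := Real.log_pos one_lt_two
  have hfun : (fun s : ℝ => (s / (η * h ^ 2)) *
        (N0 * ((2:ℝ) ^ ((T - s) / (B * R * β * s)) - 1)))
      = fun s : ℝ => (s / A) * (N0 * (Real.exp (L * ((T - s) / (c * s))) - 1)) := by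
    funext s
    rw [Real.rpow_def_of_pos (by norm_num : (0:ℝ) < 2)]
  -- derivative of the exponent
  have hu : ∀ s : ℝ, s ≠ 0 →
      HasDerivAt (fun s : ℝ => (T - s) / (c * s)) (-T / (c * s ^ 2)) s := by
    intro s hs
    have h1 : HasDerivAt (fun s : ℝ => T - s) (-1) s := by
      simpa using (hasDerivAt_id s).const_sub T
    have h2 : HasDerivAt (fun s : ℝ => c * s) c s := by
      simpa using (hasDerivAt_id s).const_mul c
    have := h1.fun_div h2 (mul_ne_zero hc0.ne' hs)
    refine this.congr_deriv ?_
    rw [div_eq_div_iff (pow_ne_zero 2 (mul_ne_zero hc0.ne' hs)) (mul_ne_zero hc0.ne' (pow_ne_zero 2 hs))]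
    ring
  have hE : ∀ s : ℝ, s ≠ 0 →
      HasDerivAt (fun s : ℝ => Real.exp (L * ((T - s) / (c * s))))
        (Real.exp (L * ((T - s) / (c * s))) * (L * (-T / (c * s ^ 2)))) s := by
    intro s hs
    exact ((hu s hs).const_mul L).exp
  -- first derivative
  set F : ℝ → ℝ := fun s =>
    1 / A * (N0 * (Real.exp (L * ((T - s) / (c * s))) - 1)) +
      s / A * (N0 * (Real.exp (L * ((T - s) / (c * s))) * (L * (-T / (c * s ^ 2)))))
    with hFdef
  have hF : ∀ s : ℝ, s ≠ 0 →
      HasDerivAt (fun s : ℝ => (s / A) * (N0 * (Real.exp (L * ((T - s) / (c * s))) - 1)))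
        (F s) s := by
    intro s hs
    have h1 : HasDerivAt (fun s : ℝ => s / A) (1 / A) s := by
      simpa using (hasDerivAt_id s).div_const A
    have h2 : HasDerivAt (fun s : ℝ => N0 * (Real.exp (L * ((T - s) / (c * s))) - 1))
        (N0 * (Real.exp (L * ((T - s) / (c * s))) * (L * (-T / (c * s ^ 2))))) s :=
      ((hE s hs).sub_const 1).const_mul N0
    simpa [hFdef] using h1.fun_mul h2
  rw [hfun]
  have heq : deriv (fun s : ℝ => (s / A) * (N0 * (Real.exp (L * ((T - s) / (c * s))) - 1)))
      =ᶠ[nhds t] F := by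
    filter_upwards [Ioi_mem_nhds ht0] with s hs
    exact (hF s (ne_of_gt hs)).deriv
  rw [heq.deriv_eq]
  -- second derivative
  have hsq : HasDerivAt (fun s : ℝ => c * s ^ 2) (c * (2 * t ^ 1)) t :=
    (hasDerivAt_pow 2 t).const_mul c
  have hden : HasDerivAt (fun s : ℝ => -T / (c * s ^ 2))
      ((0 * (c * t ^ 2) - -T * (c * (2 * t ^ 1))) / (c * t ^ 2) ^ 2) t :=
    (hasDerivAt_const t (-T)).div hsq (by positivity)
  have hEt := hE t ht0.ne'
  have h1 : HasDerivAt (fun s : ℝ => s / A) (1 / A) t := by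
    simpa using (hasDerivAt_id t).div_const A
  have hterm1 : HasDerivAt
      (fun s : ℝ => 1 / A * (N0 * (Real.exp (L * ((T - s) / (c * s))) - 1)))
      (1 / A * (N0 * (Real.exp (L * ((T - t) / (c * t))) * (L * (-T / (c * t ^ 2)))))) t :=
    (((hE t ht0.ne').sub_const 1).const_mul N0).const_mul (1 / A)
  have hinner : HasDerivAt
      (fun s : ℝ => Real.exp (L * ((T - s) / (c * s))) * (L * (-T / (c * s ^ 2))))
      (Real.exp (L * ((T - t) / (c * t))) * (L * (-T / (c * t ^ 2))) *
          (L * (-T / (c * t ^ 2))) +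
        Real.exp (L * ((T - t) / (c * t))) *
          (L * ((0 * (c * t ^ 2) - -T * (c * (2 * t ^ 1))) / (c * t ^ 2) ^ 2))) t :=
    hEt.mul (hden.const_mul L)
  have hterm2 : HasDerivAt
      (fun s : ℝ => s / A *
        (N0 * (Real.exp (L * ((T - s) / (c * s))) * (L * (-T / (c * s ^ 2))))))
      (1 / A * (N0 * (Real.exp (L * ((T - t) / (c * t))) * (L * (-T / (c * t ^ 2))))) +
        t / A * (N0 *
          (Real.exp (L * ((T - t) / (c * t))) * (L * (-T / (c * t ^ 2))) *
              (L * (-T / (c * t ^ 2))) +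
            Real.exp (L * ((T - t) / (c * t))) *
              (L * ((0 * (c * t ^ 2) - -T * (c * (2 * t ^ 1))) / (c * t ^ 2) ^ 2))))) t :=
    h1.mul (hinner.const_mul N0)
  have hFd := (hterm1.fun_add hterm2).deriv
  rw [show F = (fun s : ℝ =>
      1 / A * (N0 * (Real.exp (L * ((T - s) / (c * s))) - 1)) +
        s / A * (N0 * (Real.exp (L * ((T - s) / (c * s))) * (L * (-T / (c * s ^ 2))))))
    from rfl, hFd]
  have hval : 1 / A * (N0 * (Real.exp (L * ((T - t) / (c * t))) * (L * (-T / (c * t ^ 2))))) +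
      (1 / A * (N0 * (Real.exp (L * ((T - t) / (c * t))) * (L * (-T / (c * t ^ 2))))) +
        t / A * (N0 *
          (Real.exp (L * ((T - t) / (c * t))) * (L * (-T / (c * t ^ 2))) *
              (L * (-T / (c * t ^ 2))) +
            Real.exp (L * ((T - t) / (c * t))) *
              (L * ((0 * (c * t ^ 2) - -T * (c * (2 * t ^ 1))) / (c * t ^ 2) ^ 2)))))
      = N0 * (T * L) ^ 2 / (η * (h * B * R * β) ^ 2 * t ^ 3) *
          (2 : ℝ) ^ ((T - t) / (B * R * β * t)) := by
    rw [Real.rpow_def_of_pos (by norm_num : (0:ℝ) < 2)]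
    rw [hA, hc, hL]
    field_simp
    ring
  constructor
  · exact hval
  · rw [hval]
    exact mul_pos (div_pos (mul_pos hN0 (pow_pos (mul_pos hT hL0) 2)) (by positivity))
      (Real.rpow_pos_of_pos two_pos _)
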